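/- Let H = ⊕_{n∈ℕ} ℂⁿ (Hilbert space direct sum). For each n let eⁿ := Σ_{i=1}^n (e_i ⊗ e_i)/√n ∈ ℂⁿ ⊗ ℂⁿ, a unit vector, and p_n := eⁿ(eⁿ)*. Define L_2 := ⊕_{n} n·p_n on ⊕_n ℂⁿ⊗ℂⁿ ⊆ H ⊗ H. Then L_2 is an unbounded positive operator, yet for every x = ⊕_n xⁿ ∈ H one has (x ⊗ id_H)* L_2 (x ⊗ id_H) ≤ ‖x‖² id_H. -/

import Mathlib

open scoped InnerProductSpace ComplexOrder

private lemma normE_eq_one (n : ℕ+) (E : EuclideanSpace ℂ (Fin n × Fin n))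
    (hE : ∀ p : Fin n × Fin n, E p = if p.1 = p.2 then ((Real.sqrt n : ℝ) : ℂ)⁻¹ else 0) :
    ‖E‖ = 1 := by
  have hsq : ∀ p : Fin n × Fin n, ‖E p‖ ^ 2 = if p.1 = p.2 then (n : ℝ)⁻¹ else 0 := by
    intro p
    rw [hE p]
    split_ifs
    · rw [norm_inv, Complex.norm_real, Real.norm_eq_abs,
        abs_of_nonneg (Real.sqrt_nonneg _), inv_pow, Real.sq_sqrt (by positivity)]
    · simp
  rw [EuclideanSpace.norm_eq]
  have : ∑ p : Fin n × Fin n, ‖E p‖ ^ 2 = 1 := by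
    simp only [hsq, Fintype.sum_prod_type]
    simp [Finset.sum_ite_eq', mul_inv_cancel₀ (by positivity : (n:ℝ) ≠ 0)]
  rw [this, Real.sqrt_one]

/-- Let `H = ⊕ₙ ℂⁿ` (Hilbert-space direct sum).  For each `n`, let
`eⁿ = ∑ᵢ (eᵢ ⊗ eᵢ)/√n` be the maximally entangled unit vector in
`ℂⁿ ⊗ ℂⁿ ≅ EuclideanSpace ℂ (Fin n × Fin n)`, `pₙ = eⁿ(eⁿ)*` the rank-one projection
onto it, and `L₂ = ⊕ₙ n·pₙ` on `⊕ₙ ℂⁿ⊗ℂⁿ ⊆ H ⊗ H`.  Then `L₂` is positive and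
unbounded, yet `(x ⊗ id)* L₂ (x ⊗ id) ≤ ‖x‖² id_H` for every `x ∈ H`; blockwise, using
`⟨xⁿ⊗yⁿ, n pₙ (xⁿ⊗yⁿ)⟩ = |∑ᵢ xⁿᵢ yⁿᵢ|²`, this reads
`∑ₙ |∑ᵢ xⁿᵢ yⁿᵢ|² ≤ ‖x‖²‖y‖²` for all `y ∈ H`. -/
theorem unbounded_L_bounded_creator_map
    (E : ∀ n : ℕ+, EuclideanSpace ℂ (Fin n × Fin n))
    (hE : ∀ (n : ℕ+) (p : Fin n × Fin n),
      E n p = if p.1 = p.2 then ((Real.sqrt n : ℝ) : ℂ)⁻¹ else 0) :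
    -- `L₂` is positive:
    (∀ (n : ℕ+) (X : EuclideanSpace ℂ (Fin n × Fin n)),
      0 ≤ ⟪X, (n : ℂ) • (⟪E n, X⟫_ℂ • E n)⟫_ℂ) ∧
    -- `L₂` is unbounded (its `n`-th block `n pₙ` has norm `n`):
    (∀ C : ℝ, ∃ (n : ℕ+) (X : EuclideanSpace ℂ (Fin n × Fin n)),
      ‖X‖ = 1 ∧ C < ‖(n : ℂ) • (⟪E n, X⟫_ℂ • E n)‖) ∧
    -- `(x ⊗ id)* L₂ (x ⊗ id) ≤ ‖x‖² id_H`: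
    (∀ x y : lp (fun n : ℕ+ => EuclideanSpace ℂ (Fin n)) 2,
      ∑' n : ℕ+, ‖∑ i, x n i * y n i‖ ^ 2 ≤ ‖x‖ ^ 2 * ‖y‖ ^ 2) := by
  refine ⟨?_, ?_, ?_⟩
  · -- positivity
    intro n X
    rw [inner_smul_right, inner_smul_right, ← inner_conj_symm X (E n), Complex.mul_conj]
    have : (0:ℂ) ≤ ((n : ℝ) * Complex.normSq ⟪E n, X⟫_ℂ : ℝ) := by
      rw [Complex.zero_le_real]
      exact mul_nonneg (by positivity) (Complex.normSq_nonneg _)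
    convert this using 1
    push_cast; ring
  · -- unboundedness
    intro C
    set n : ℕ+ := ⟨⌈C⌉₊ + 1, by positivity⟩ with hn
    refine ⟨n, E n, normE_eq_one n (E n) (hE n), ?_⟩
    have h1 : ⟪E n, E n⟫_ℂ = 1 := by
      rw [inner_self_eq_norm_sq_to_K, normE_eq_one n (E n) (hE n)]; norm_num
    have h2 : ‖(n : ℂ) • (⟪E n, E n⟫_ℂ • E n)‖ = n := by
      rw [h1, one_smul, norm_smul, normE_eq_one n (E n) (hE n)]
      simp
    rw [h2]
    calc C ≤ (⌈C⌉₊ : ℝ) := Nat.le_ceil C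
      _ < ((⌈C⌉₊ + 1 : ℕ) : ℝ) := by exact_mod_cast Nat.lt_succ_self _
      _ = (n : ℝ) := by rw [hn]; norm_cast
  · -- the bound
    intro x y
    have key : ∀ n : ℕ+, ‖∑ i, x n i * y n i‖ ^ 2 ≤ ‖x n‖ ^ 2 * ‖y n‖ ^ 2 := by
      intro n
      set a : EuclideanSpace ℂ (Fin n) := WithLp.toLp 2 (fun i => (starRingEnd ℂ) (x n i)) with ha
      have h1 : ⟪a, y n⟫_ℂ = ∑ i, x n i * y n i := by
        simp [PiLp.inner_apply, ha, RingHom.id_apply, mul_comm]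
      have h2 : ‖a‖ = ‖x n‖ := by
        rw [EuclideanSpace.norm_eq, EuclideanSpace.norm_eq]
        congr 1; apply Finset.sum_congr rfl; intro i _
        simp [ha]
      calc ‖∑ i, x n i * y n i‖ ^ 2 = ‖⟪a, y n⟫_ℂ‖ ^ 2 := by rw [h1]
        _ ≤ (‖a‖ * ‖y n‖) ^ 2 := by
            gcongr; exact norm_inner_le_norm a (y n)
        _ = ‖x n‖ ^ 2 * ‖y n‖ ^ 2 := by rw [h2]; ring
    have hx : Summable fun n : ℕ+ => ‖x n‖ ^ 2 := by
      have := lp.memℓp x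
      rw [memℓp_gen_iff (by norm_num)] at this
      simpa [Real.rpow_natCast] using this
    have hy : Summable fun n : ℕ+ => ‖y n‖ ^ 2 := by
      have := lp.memℓp y
      rw [memℓp_gen_iff (by norm_num)] at this
      simpa [Real.rpow_natCast] using this
    have hnx : ‖x‖ ^ 2 = ∑' n, ‖x n‖ ^ 2 := by
      have := lp.norm_rpow_eq_tsum (p := 2) (by norm_num) x
      simpa [Real.rpow_natCast] using this
    have hny : ‖y‖ ^ 2 = ∑' n, ‖y n‖ ^ 2 := by
      have := lp.norm_rpow_eq_tsum (p := 2) (by norm_num) y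
      simpa [Real.rpow_natCast] using this
    have hby : ∀ n, ‖y n‖ ^ 2 ≤ ‖y‖ ^ 2 := fun n =>
      hny ▸ Summable.le_tsum hy n (fun m _ => by positivity)
    have hsum2 : Summable fun n : ℕ+ => ‖x n‖ ^ 2 * ‖y‖ ^ 2 := hx.mul_right _
    have hsum1 : Summable fun n : ℕ+ => ‖∑ i, x n i * y n i‖ ^ 2 :=
      Summable.of_nonneg_of_le (fun n => by positivity)
        (fun n => le_trans (key n)
          (mul_le_mul_of_nonneg_left (hby n) (by positivity))) hsum2
    calc ∑' n : ℕ+, ‖∑ i, x n i * y n i‖ ^ 2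
        ≤ ∑' n, ‖x n‖ ^ 2 * ‖y‖ ^ 2 := Summable.tsum_le_tsum
          (fun n => le_trans (key n)
            (mul_le_mul_of_nonneg_left (hby n) (by positivity))) hsum1 hsum2
      _ = (∑' n, ‖x n‖ ^ 2) * ‖y‖ ^ 2 := tsum_mul_right
      _ = ‖x‖ ^ 2 * ‖y‖ ^ 2 := by rw [hnx]
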